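/- Let n ≥ 1 and let A be a real n×n matrix satisfying the cyclic non-increasing condition, such that the graph 𝒢(A) has exactly one closed strongly connected component and the system Aᵀx = e has a solution x. Then either x ≥ 0 componentwise and det A > 0, or x ≤ 0 componentwise and det A < 0. -/

import Mathlib

open Matrix BigOperators

/-- The cyclic non-increasing condition: each row of `A` weakly decreases
cyclically starting from the diagonal, i.e. `a_{i[j-1]} ≥ a_{ij}` for all
`j ≠ i` (indices in `Fin n`, arithmetic mod `n`). -/
def CyclicNonIncr {n : ℕ} [NeZero n] (A : Matrix (Fin n) (Fin n) ℝ) : Prop :=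
  ∀ i j : Fin n, j ≠ i → A i (j - 1) ≥ A i j

/-- The directed graph `𝒢(A)` has an edge from `i` to `j` iff `a_{i[j-1]} > a_{ij}`. -/
def GraphEdge {n : ℕ} [NeZero n] (A : Matrix (Fin n) (Fin n) ℝ) (i j : Fin n) : Prop :=
  A i (j - 1) > A i j

/-- `i` and `j` are strongly connected in `𝒢(A)`: there are directed paths
(possibly of length 0) from `i` to `j` and from `j` to `i`. -/
def Conn {n : ℕ} [NeZero n] (A : Matrix (Fin n) (Fin n) ℝ) (i j : Fin n) : Prop :=
  Relation.ReflTransGen (GraphEdge A) i j ∧ Relation.ReflTransGen (GraphEdge A) j i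

/-- `C` is a strongly connected component of `𝒢(A)`: an equivalence class of
the strong-connectivity relation. -/
def IsSCC {n : ℕ} [NeZero n] (A : Matrix (Fin n) (Fin n) ℝ) (C : Set (Fin n)) : Prop :=
  ∃ i, C = {j | Conn A i j}

/-- `C` is a closed SCC of `𝒢(A)`: an SCC with no edge leaving it. -/
def IsClosedSCC {n : ℕ} [NeZero n] (A : Matrix (Fin n) (Fin n) ℝ) (C : Set (Fin n)) : Prop :=
  IsSCC A C ∧ ∀ i ∈ C, ∀ j, GraphEdge A i j → j ∈ C

/-- `C` is an open SCC of `𝒢(A)`: an SCC with some edge leaving it. -/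
def IsOpenSCC {n : ℕ} [NeZero n] (A : Matrix (Fin n) (Fin n) ℝ) (C : Set (Fin n)) : Prop :=
  IsSCC A C ∧ ¬ (∀ i ∈ C, ∀ j, GraphEdge A i j → j ∈ C)

section Helpers
variable {n : ℕ} [NeZero n]
open Fin.NatCast

/-- partial sums of `v` -/
noncomputable def psum (v : Fin n → ℝ) (k : Fin n) : ℝ :=
  ∑ l ∈ Finset.range k.val, v (l : Fin n)

lemma psum_succ (v : Fin n → ℝ) (hv : ∑ j, v j = 0) (k : Fin n) :
    psum v (k + 1) = psum v k + v k := by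
  have hn : 0 < n := Nat.pos_of_ne_zero (NeZero.ne n)
  have hvk : v ((k.val : Fin n)) = v k := by rw [Fin.cast_val_eq_self]
  by_cases h : k.val + 1 < n
  · have hval : ((k + 1 : Fin n)).val = k.val + 1 := by
      have h1 : ((1 : Fin n)).val = 1 := by
        rw [Fin.val_one']; exact Nat.mod_eq_of_lt (by omega)
      rw [Fin.val_add, h1, Nat.mod_eq_of_lt h]
    rw [psum, hval, Finset.sum_range_succ, hvk]; rfl
  · have hk : k.val + 1 = n := by have := k.isLt; omega
    have hval : (k + 1 : Fin n) = 0 := by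
      apply Fin.ext
      rw [Fin.val_add, Fin.val_one', Fin.val_zero]
      rcases Nat.eq_or_lt_of_le (Nat.one_le_iff_ne_zero.mpr (NeZero.ne n)) with h1 | h1
      · subst h1; omega
      · rw [Nat.mod_eq_of_lt h1, hk, Nat.mod_self]
    have hsum : ∑ l ∈ Finset.range n, v (l : Fin n) = 0 := by
      rw [← hv, ← Fin.sum_univ_eq_sum_range (fun l => v (l : Fin n)) n]
      exact Finset.sum_congr rfl fun i _ => by rw [Fin.cast_val_eq_self]
    have h2 : psum v k + v k = ∑ l ∈ Finset.range n, v (l : Fin n) := by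
      have h3 : ∑ l ∈ Finset.range (k.val + 1), v (l : Fin n) = psum v k + v k := by
        rw [Finset.sum_range_succ, psum, hvk]
      rw [hk] at h3
      exact h3.symm
    rw [hval, h2, hsum]
    simp [psum]

lemma v_eq_psum (v : Fin n → ℝ) (hv : ∑ j, v j = 0) (k : Fin n) :
    v k = psum v (k + 1) - psum v k := by
  rw [psum_succ v hv k]; ring

lemma sum_q_zero (A : Matrix (Fin n) (Fin n) ℝ) (k : Fin n) :
    ∑ j, (A k (j - 1) - A k j) = 0 := by
  rw [Finset.sum_sub_distrib]
  have : ∑ j : Fin n, A k (j - 1) = ∑ j : Fin n, A k j := by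
    have h := Equiv.sum_comp (Equiv.addRight (1 : Fin n)) (fun j => A k (j - 1))
    simp only [Equiv.coe_addRight, add_sub_cancel_right] at h
    exact h.symm
  rw [this, sub_self]

lemma sum_mul_v (A : Matrix (Fin n) (Fin n) ℝ) (k : Fin n) (v : Fin n → ℝ)
    (hv : ∑ j, v j = 0) :
    ∑ j, A k j * v j = ∑ j, (A k (j - 1) - A k j) * psum v j := by
  have h1 : ∀ j, v j = psum v (j + 1) - psum v j := v_eq_psum v hv
  calc ∑ j, A k j * v j = ∑ j, (A k j * psum v (j + 1) - A k j * psum v j) := by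
        refine Finset.sum_congr rfl fun j _ => ?_
        rw [h1 j]; ring
    _ = ∑ j, A k j * psum v (j + 1) - ∑ j, A k j * psum v j := Finset.sum_sub_distrib _ _
    _ = ∑ j, A k (j - 1) * psum v j - ∑ j, A k j * psum v j := by
        congr 1
        have h := Equiv.sum_comp (Equiv.addRight (1 : Fin n))
          (fun j => A k (j - 1) * psum v j)
        simp only [Equiv.coe_addRight, add_sub_cancel_right] at h
        exact h
    _ = ∑ j, (A k (j - 1) - A k j) * psum v j := by
        rw [← Finset.sum_sub_distrib]
        exact Finset.sum_congr rfl fun j _ => by ring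

lemma step_max {A : Matrix (Fin n) (Fin n) ℝ} (hA : CyclicNonIncr A)
    {w : Fin n → ℝ} {k : Fin n} (hk : ∀ j, w j ≤ w k)
    (heq : ∑ j, (A k (j - 1) - A k j) * w j = 0) :
    ∀ j, GraphEdge A k j → w j = w k := by
  have h0 : ∑ j, (A k (j - 1) - A k j) * (w j - w k) = 0 := by
    have : ∑ j, (A k (j - 1) - A k j) * (w j - w k)
        = ∑ j, (A k (j - 1) - A k j) * w j - (∑ j, (A k (j - 1) - A k j)) * w k := by
      rw [Finset.sum_mul, ← Finset.sum_sub_distrib]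
      exact Finset.sum_congr rfl fun j _ => by ring
    rw [this, heq, sum_q_zero, zero_mul, sub_zero]
  have hterm : ∀ j ∈ Finset.univ, (A k (j - 1) - A k j) * (w j - w k) ≤ 0 := by
    intro j _
    by_cases hjk : j = k
    · subst hjk; simp
    · exact mul_nonpos_of_nonneg_of_nonpos (sub_nonneg.mpr (hA k j hjk))
        (sub_nonpos.mpr (hk j))
  have hall := (Finset.sum_eq_zero_iff_of_nonpos hterm).mp h0
  intro j hedge
  by_cases hjk : j = k
  · rw [hjk]
  · have hq : 0 < A k (j - 1) - A k j := sub_pos.mpr hedge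
    have := hall j (Finset.mem_univ j)
    have hwz : w j - w k = 0 := by
      rcases mul_eq_zero.mp this with h | h
      · exact absurd h (ne_of_gt hq)
      · exact h
    linarith


lemma closedSCC_in (A : Matrix (Fin n) (Fin n) ℝ) (S : Set (Fin n)) (hS : S.Nonempty)
    (hcl : ∀ k ∈ S, ∀ j, GraphEdge A k j → j ∈ S) :
    ∃ C, IsClosedSCC A C ∧ C ⊆ S := by
  classical
  set reach := Relation.ReflTransGen (GraphEdge A) with hreachdef
  have hreach : ∀ k ∈ S, ∀ j, reach k j → j ∈ S := by
    intro k hk j hj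
    induction hj with
    | refl => exact hk
    | tail _ e ih => exact hcl _ ih _ e
  set f : Fin n → ℕ := fun u => (Finset.univ.filter (fun z => reach u z)).card with hf
  have hne : (f '' S).Nonempty := hS.image f
  obtain ⟨u₀, hu₀S, hfu₀⟩ := Nat.sInf_mem hne
  have hmin : ∀ u ∈ S, f u₀ ≤ f u := by
    intro u hu; rw [hfu₀]; exact Nat.sInf_le ⟨u, hu, rfl⟩
  have hclaim : ∀ j, reach u₀ j → reach j u₀ := by
    intro j hj
    by_contra hnr
    have hjS : j ∈ S := hreach u₀ hu₀S j hj
    have hsub : (Finset.univ.filter (fun z => reach j z)) ⊂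
        (Finset.univ.filter (fun z => reach u₀ z)) := by
      constructor
      · intro z hz
        simp only [Finset.mem_filter, Finset.mem_univ, true_and] at hz ⊢
        exact hj.trans hz
      · intro hsub'
        have : u₀ ∈ Finset.univ.filter (fun z => reach u₀ z) := by
          simp [Relation.ReflTransGen.refl, hreachdef]
        have := hsub' this
        simp only [Finset.mem_filter, Finset.mem_univ, true_and] at this
        exact hnr this
    have := Finset.card_lt_card hsub
    have := hmin j hjS
    simp only [hf] at *
    omega
  refine ⟨{z | Conn A u₀ z}, ⟨⟨u₀, rfl⟩, ?_⟩, ?_⟩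
  · rintro k ⟨hk1, hk2⟩ j hedge
    have h1 : reach u₀ j := hk1.tail hedge
    exact ⟨h1, hclaim j h1⟩
  · rintro z ⟨hz1, _⟩
    exact hreach u₀ hu₀S z hz1

lemma psum_const_of (v : Fin n → ℝ) (hv : ∑ j, v j = 0)
    (h : ∀ j, psum v j = psum v (0 : Fin n)) : v = 0 := by
  funext k
  rw [v_eq_psum v hv k, h (k + 1), h k, sub_self]; rfl

/-- The generic max-principle argument: a maximum of `w` not attained at `i₀`
    yields a closed SCC avoiding `i₀`. -/
lemma max_principle {A : Matrix (Fin n) (Fin n) ℝ} (hA : CyclicNonIncr A)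
    {i₀ : Fin n} {w : Fin n → ℝ}
    (hq : ∀ k, k ≠ i₀ → ∑ j, (A k (j - 1) - A k j) * w j = 0)
    {kM : Fin n} (hkM : ∀ j, w j ≤ w kM) (hlt : w i₀ < w kM) :
    ∃ C, IsClosedSCC A C ∧ i₀ ∉ C := by
  have hScl : ∀ k ∈ {j | w j = w kM}, ∀ j, GraphEdge A k j → j ∈ {j | w j = w kM} := by
    intro k hk j hedge
    have hkne : k ≠ i₀ := by
      intro h; rw [h] at hk; exact absurd hk (ne_of_lt hlt)
    have hkmax : ∀ j', w j' ≤ w k := by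
      intro j'; rw [Set.mem_setOf_eq.mp hk]; exact hkM j'
    have := step_max hA hkmax (hq k hkne) j hedge
    rw [Set.mem_setOf_eq, this, Set.mem_setOf_eq.mp hk]
  obtain ⟨C, hC, hCsub⟩ := closedSCC_in A {j | w j = w kM} ⟨kM, rfl⟩ hScl
  refine ⟨C, hC, fun h => ?_⟩
  have : w i₀ = w kM := hCsub h
  exact absurd this (ne_of_lt hlt)

/-- trivial kernel for `updateRow i₀ 𝟙 A`, for `i₀` in the unique closed SCC. -/
lemma kernel_zero {A : Matrix (Fin n) (Fin n) ℝ} (hA : CyclicNonIncr A)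
    {C₀ : Set (Fin n)} (hC₀ : IsClosedSCC A C₀)
    (huniq : ∀ C', IsClosedSCC A C' → C' = C₀)
    {i₀ : Fin n} (hi₀ : i₀ ∈ C₀)
    (v : Fin n → ℝ) (hv : ∑ j, v j = 0)
    (hrows : ∀ k, k ≠ i₀ → ∑ j, A k j * v j = 0) : v = 0 := by
  set w := psum v with hw
  have hq : ∀ k, k ≠ i₀ → ∑ j, (A k (j - 1) - A k j) * w j = 0 := by
    intro k hk
    rw [← sum_mul_v A k v hv]
    exact hrows k hk
  have hqneg : ∀ k, k ≠ i₀ → ∑ j, (A k (j - 1) - A k j) * (-w) j = 0 := by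
    intro k hk
    have := hq k hk
    rw [← neg_eq_zero, ← Finset.sum_neg_distrib] at this
    rw [← this]
    exact Finset.sum_congr rfl fun j _ => by simp [mul_neg]
  obtain ⟨kM, hkM⟩ := Finite.exists_max w
  obtain ⟨km, hkm⟩ := Finite.exists_max (-w)
  by_cases hmax : w i₀ < w kM
  · obtain ⟨C, hC, hiC⟩ := max_principle hA hq hkM hmax
    rw [huniq C hC] at hiC
    exact absurd hi₀ hiC
  by_cases hmin : (-w) i₀ < (-w) km
  · obtain ⟨C, hC, hiC⟩ := max_principle hA hqneg hkm hmin
    rw [huniq C hC] at hiC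
    exact absurd hi₀ hiC
  push_neg at hmax hmin
  have hconst : ∀ j, w j = w i₀ := by
    intro j
    have h1 : w j ≤ w i₀ := by
      have := hkM j
      have h2 : w kM ≤ w i₀ := hmax
      linarith
    have h2 : w i₀ ≤ w j := by
      have := hkm j
      have h3 : (-w) km ≤ (-w) i₀ := hmin
      simp only [Pi.neg_apply] at this h3
      linarith
    linarith
  apply psum_const_of v hv
  intro j
  rw [show psum v j = w j from rfl, show psum v 0 = w 0 from rfl, hconst j, hconst 0]


def CyclicStrict (M : Matrix (Fin n) (Fin n) ℝ) : Prop :=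
  ∀ k j : Fin n, j ≠ k → M k (j - 1) > M k j

lemma CyclicStrict.nonIncr {M : Matrix (Fin n) (Fin n) ℝ} (h : CyclicStrict M) :
    CyclicNonIncr M := fun k j hj => le_of_lt (h k j hj)

lemma strict_kernel {M : Matrix (Fin n) (Fin n) ℝ} (hM : CyclicStrict M) (i : Fin n)
    (v : Fin n → ℝ) (hv : ∑ j, v j = 0)
    (hrows : ∀ k, k ≠ i → ∑ j, M k j * v j = 0) : v = 0 := by
  set w := psum v with hw
  have hq : ∀ k, k ≠ i → ∑ j, (M k (j - 1) - M k j) * w j = 0 := by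
    intro k hk
    rw [← sum_mul_v M k v hv]
    exact hrows k hk
  have hqneg : ∀ k, k ≠ i → ∑ j, (M k (j - 1) - M k j) * (-w) j = 0 := by
    intro k hk
    have := hq k hk
    rw [← neg_eq_zero, ← Finset.sum_neg_distrib] at this
    rw [← this]
    exact Finset.sum_congr rfl fun j _ => by simp [mul_neg]
  have generic : ∀ w' : Fin n → ℝ,
      (∀ k, k ≠ i → ∑ j, (M k (j - 1) - M k j) * w' j = 0) →
      ∀ kM : Fin n, (∀ j, w' j ≤ w' kM) → ¬ (w' i < w' kM) := by
    intro w' hq' kM hkM hlt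
    have hkne : kM ≠ i := fun h => by rw [h] at hlt; exact lt_irrefl _ hlt
    have hstep := step_max hM.nonIncr hkM (hq' kM hkne)
    have : w' i = w' kM := hstep i (hM kM i (Ne.symm hkne))
    rw [this] at hlt; exact lt_irrefl _ hlt
  obtain ⟨kM, hkM⟩ := Finite.exists_max w
  obtain ⟨km, hkm⟩ := Finite.exists_max (-w)
  have h1 : ¬ (w i < w kM) := generic w hq kM hkM
  have h2 : ¬ ((-w) i < (-w) km) := generic (-w) hqneg km hkm
  push_neg at h1 h2
  have hconst : ∀ j, w j = w i := by
    intro j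
    have := hkM j
    have := hkm j
    simp only [Pi.neg_apply] at *
    linarith
  apply psum_const_of v hv
  intro j
  rw [show psum v j = w j from rfl, show psum v 0 = w 0 from rfl, hconst j, hconst 0]


lemma det_updateRow_ne_zero {M : Matrix (Fin n) (Fin n) ℝ} {i : Fin n}
    (h : ∀ v : Fin n → ℝ, (∑ j, v j = 0) → (∀ k, k ≠ i → ∑ j, M k j * v j = 0) → v = 0) :
    (M.updateRow i (fun _ => (1 : ℝ))).det ≠ 0 := by
  classical
  intro h0
  obtain ⟨v, hvne, hmv⟩ := (Matrix.exists_mulVec_eq_zero_iff).mpr h0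
  have hrow : ∀ k, (M.updateRow i (fun _ => (1:ℝ))).mulVec v k = 0 := fun k => congrFun hmv k
  have hv0 : ∑ j, v j = 0 := by
    have := hrow i
    simp only [Matrix.mulVec, dotProduct, Matrix.updateRow_self] at this
    simpa using this
  have hker : ∀ k, k ≠ i → ∑ j, M k j * v j = 0 := by
    intro k hk
    have := hrow k
    simp only [Matrix.mulVec, dotProduct, Matrix.updateRow_apply, if_neg hk] at this
    exact this
  exact hvne (h v hv0 hker)

lemma det_updateRow_finset_sum {κ : Type*} (M : Matrix (Fin n) (Fin n) ℝ) (i : Fin n)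
    (s : Finset κ) (f : κ → Fin n → ℝ) :
    (M.updateRow i (∑ j ∈ s, f j)).det = ∑ j ∈ s, (M.updateRow i (f j)).det := by
  classical
  induction s using Finset.induction_on with
  | empty =>
      simp only [Finset.sum_empty]
      exact Matrix.det_eq_zero_of_row_eq_zero i (fun j => by simp)
  | insert _ _ hk ih =>
      rw [Finset.sum_insert hk, Matrix.det_updateRow_add, ih, Finset.sum_insert hk]

lemma det_one_updateRow (i : Fin n) :
    ((1 : Matrix (Fin n) (Fin n) ℝ).updateRow i (fun _ => (1 : ℝ))).det = 1 := by
  classical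
  have hones : (fun _ => (1:ℝ)) = ∑ j : Fin n, Pi.single j (1 : ℝ) := by
    have := Finset.univ_sum_single (fun _ => (1 : ℝ) : Fin n → ℝ)
    exact this.symm
  rw [hones, det_updateRow_finset_sum]
  rw [Fintype.sum_eq_single i]
  · have : (1 : Matrix (Fin n) (Fin n) ℝ).updateRow i (Pi.single i 1) = 1 := by
      rw [show (Pi.single i (1:ℝ)) = (1 : Matrix (Fin n) (Fin n) ℝ) i from ?_]
      · exact Matrix.updateRow_eq_self _ _
      · funext j
        simp [Matrix.one_apply, Pi.single_apply, eq_comm]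
    rw [this, Matrix.det_one]
  · intro j hj
    apply Matrix.det_zero_of_row_eq (show i ≠ j from Ne.symm hj)
    rw [Matrix.updateRow_self, Matrix.updateRow_ne hj]
    funext l
    simp [Matrix.one_apply, Pi.single_apply, eq_comm]


lemma strict_convex_path {M : Matrix (Fin n) (Fin n) ℝ} (hM : CyclicStrict M)
    {t : ℝ} (ht0 : 0 < t) (ht1 : t ≤ 1) :
    CyclicStrict ((1 - t) • (1 : Matrix (Fin n) (Fin n) ℝ) + t • M) := by
  intro k j hj
  simp only [Matrix.add_apply, Matrix.smul_apply, smul_eq_mul]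
  have h1 : t * M k j < t * M k (j - 1) := by
    exact mul_lt_mul_of_pos_left (hM k j hj) ht0
  have h2 : (1 - t) * (1 : Matrix (Fin n) (Fin n) ℝ) k j ≤
      (1 - t) * (1 : Matrix (Fin n) (Fin n) ℝ) k (j - 1) := by
    have hj' : (1 : Matrix (Fin n) (Fin n) ℝ) k j = 0 := Matrix.one_apply_ne' hj
    rw [hj', mul_zero]
    apply mul_nonneg (by linarith)
    by_cases h : k = j - 1 <;> simp [Matrix.one_apply, h]
  linarith

lemma det_pos_of_strict {M : Matrix (Fin n) (Fin n) ℝ} (hM : CyclicStrict M) (i : Fin n) :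
    0 < (M.updateRow i (fun _ => (1 : ℝ))).det := by
  classical
  set g : ℝ → ℝ := fun t =>
    ((((1 - t) • (1 : Matrix (Fin n) (Fin n) ℝ) + t • M)).updateRow i (fun _ => (1:ℝ))).det
    with hg
  have hcont : Continuous g := by
    apply Continuous.matrix_det
    apply Continuous.matrix_updateRow
    · exact ((continuous_const.sub continuous_id).smul continuous_const).add
        (continuous_id.smul continuous_const)
    · exact continuous_const
  have hg0 : g 0 = 1 := by
    simp only [hg, sub_zero, one_smul, zero_smul, add_zero]
    exact det_one_updateRow i
  have hgne : ∀ t ∈ Set.Ioc (0:ℝ) 1, g t ≠ 0 := by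
    intro t ht
    exact det_updateRow_ne_zero (strict_kernel (strict_convex_path hM ht.1 ht.2) i)
  have hg1 : g 1 = (M.updateRow i (fun _ => (1:ℝ))).det := by
    simp [hg]
  by_contra hle
  push_neg at hle
  have hne1 : g 1 ≠ 0 := hgne 1 ⟨one_pos, le_refl 1⟩
  have hlt : g 1 < 0 := by
    rw [hg1]
    rcases lt_or_eq_of_le hle with h | h
    · exact h
    · exact absurd (hg1.trans h) hne1
  have h0mem : (0:ℝ) ∈ Set.Icc (g 1) (g 0) := ⟨le_of_lt hlt, by rw [hg0]; norm_num⟩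
  obtain ⟨t, htmem, ht0⟩ := intermediate_value_Icc' (by norm_num : (0:ℝ) ≤ 1)
    hcont.continuousOn h0mem
  have htne : t ≠ 0 := by
    intro h; rw [h, hg0] at ht0; norm_num at ht0
  exact hgne t ⟨lt_of_le_of_ne htmem.1 (Ne.symm htne), htmem.2⟩ ht0


/-- strictly cyclically decreasing circulant reference matrix -/
noncomputable def Cmat : Matrix (Fin n) (Fin n) ℝ :=
  fun k j => (n : ℝ) - ((j - k : Fin n) : ℕ)

lemma Cmat_strict : CyclicStrict (Cmat : Matrix (Fin n) (Fin n) ℝ) := by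
  intro k j hj
  simp only [Cmat]
  have ha : (j - k : Fin n) ≠ 0 := sub_ne_zero.mpr hj
  have hrw : j - 1 - k = (j - k) - 1 := sub_right_comm _ _ _
  rw [hrw]
  have hn2 : 2 ≤ n := by
    by_contra h
    push_neg at h
    interval_cases n
    · exact absurd rfl (NeZero.ne 0)
    · exact hj (Subsingleton.elim j k)
  have hlt : ((j - k - 1 : Fin n) : ℕ) < ((j - k : Fin n) : ℕ) := by
    set a := j - k with hadef
    have hav : 1 ≤ (a : ℕ) := by
      rcases Nat.eq_zero_or_pos (a : ℕ) with h | h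
      · exact absurd (Fin.ext h) ha
      · exact h
    have hsub : ((a - 1 : Fin n) : ℕ) = (a : ℕ) - 1 := by
      rw [Fin.sub_def]
      simp only [Fin.val_one']
      rw [Nat.mod_eq_of_lt (by omega : 1 < n)]
      have h1 : (n - 1) + (a : ℕ) = ((a : ℕ) - 1) + n := by omega
      rw [h1, Nat.add_mod_right, Nat.mod_eq_of_lt (by have := a.isLt; omega)]
    rw [hsub]
    omega
  have := (Nat.cast_lt (α := ℝ)).mpr hlt
  linarith

lemma pert_strict {A : Matrix (Fin n) (Fin n) ℝ} (hA : CyclicNonIncr A)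
    {ε : ℝ} (hε : 0 < ε) : CyclicStrict (A + ε • (Cmat : Matrix (Fin n) (Fin n) ℝ)) := by
  intro k j hj
  simp only [Matrix.add_apply, Matrix.smul_apply, smul_eq_mul]
  have h1 := hA k j hj
  have h2 := mul_lt_mul_of_pos_left (Cmat_strict k j hj) hε
  linarith

lemma D_nonneg {A : Matrix (Fin n) (Fin n) ℝ} (hA : CyclicNonIncr A) (i : Fin n) :
    0 ≤ (A.updateRow i (fun _ => (1 : ℝ))).det := by
  classical
  set f : ℝ → ℝ := fun ε =>
    ((A + ε • (Cmat : Matrix (Fin n) (Fin n) ℝ)).updateRow i (fun _ => (1:ℝ))).det with hf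
  have hcont : Continuous f := by
    apply Continuous.matrix_det
    apply Continuous.matrix_updateRow
    · exact continuous_const.add (continuous_id.smul continuous_const)
    · exact continuous_const
  have hpos : ∀ ε : ℝ, 0 < ε → 0 < f ε := fun ε hε =>
    det_pos_of_strict (pert_strict hA hε) i
  have hf0 : f 0 = (A.updateRow i (fun _ => (1:ℝ))).det := by simp [hf]
  have htend : Filter.Tendsto f (nhdsWithin 0 (Set.Ioi 0)) (nhds (f 0)) :=
    (hcont.continuousAt).tendsto.mono_left nhdsWithin_le_nhds
  have h := ge_of_tendsto htend (Filter.eventually_of_mem self_mem_nhdsWithin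
    (fun ε hε => le_of_lt (hpos ε hε)))
  rw [hf0] at h
  exact h


lemma detA_mul_x {A : Matrix (Fin n) (Fin n) ℝ} {x : Fin n → ℝ}
    (hx : Aᵀ.mulVec x = fun _ => (1 : ℝ)) (i : Fin n) :
    A.det * x i = (A.updateRow i (fun _ => (1 : ℝ))).det := by
  classical
  have h1 : Matrix.vecMul x A = fun _ => (1:ℝ) := by
    rw [← Matrix.mulVec_transpose]; exact hx
  have h2 : Matrix.vecMul (Matrix.vecMul x A) (Matrix.adjugate A)
      = Matrix.vecMul (fun _ => (1:ℝ)) (Matrix.adjugate A) := by rw [h1]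
  rw [Matrix.vecMul_vecMul, Matrix.mul_adjugate] at h2
  have h3 : Matrix.vecMul x (A.det • (1 : Matrix (Fin n) (Fin n) ℝ)) = A.det • x := by
    funext j
    simp [Matrix.vecMul, dotProduct, Matrix.smul_apply, Matrix.one_apply,
      Finset.mul_sum, mul_ite, mul_comm]
  rw [h3] at h2
  have h4 : (A.det • x) i = Matrix.vecMul (fun _ => (1:ℝ)) (Matrix.adjugate A) i :=
    congrFun h2 i
  have h5 : Matrix.vecMul (fun _ => (1:ℝ)) (Matrix.adjugate A) i
      = ∑ j, Matrix.adjugate A j i := by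
    simp [Matrix.vecMul, dotProduct]
  have h6 : ∑ j, Matrix.adjugate A j i
      = ∑ j, (A.updateRow i (Pi.single j 1)).det := by
    exact Finset.sum_congr rfl fun j _ => Matrix.adjugate_apply A j i
  have h7 : ∑ j, (A.updateRow i (Pi.single j (1:ℝ))).det
      = (A.updateRow i (fun _ => (1:ℝ))).det := by
    rw [← det_updateRow_finset_sum A i Finset.univ (fun j => Pi.single j (1:ℝ))]
    congr 1
    exact congrArg _ (Finset.univ_sum_single (fun _ => (1:ℝ) : Fin n → ℝ))
  rw [← h7, ← h6, ← h5]
  exact h4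

end Helpers

theorem stmt_9 (n : ℕ) [NeZero n] (hn : 1 ≤ n) (A : Matrix (Fin n) (Fin n) ℝ)
    (hA : CyclicNonIncr A)
    (hone : ∃ C : Set (Fin n), IsClosedSCC A C ∧
      ∀ C' : Set (Fin n), IsClosedSCC A C' → C' = C)
    (x : Fin n → ℝ) (hx : Aᵀ.mulVec x = fun _ => (1 : ℝ)) :
    (0 ≤ x ∧ 0 < A.det) ∨ (x ≤ 0 ∧ A.det < 0) := by
  classical
  obtain ⟨C₀, hC₀, huniq⟩ := hone
  obtain ⟨i₁, hC₀eq⟩ := hC₀.1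
  have hi₁ : i₁ ∈ C₀ := by
    rw [hC₀eq]; exact ⟨Relation.ReflTransGen.refl, Relation.ReflTransGen.refl⟩
  have key : ∀ i, A.det * x i = (A.updateRow i (fun _ => (1:ℝ))).det :=
    fun i => detA_mul_x hx i
  have hDnn : ∀ i, 0 ≤ (A.updateRow i (fun _ => (1:ℝ))).det := fun i => D_nonneg hA i
  have hDne : (A.updateRow i₁ (fun _ => (1:ℝ))).det ≠ 0 :=
    det_updateRow_ne_zero (fun v hv hk => kernel_zero hA hC₀ huniq hi₁ v hv hk)
  have hDpos : 0 < (A.updateRow i₁ (fun _ => (1:ℝ))).det :=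
    lt_of_le_of_ne (hDnn i₁) (Ne.symm hDne)
  have hdet : A.det ≠ 0 := by
    intro h
    have := key i₁
    rw [h, zero_mul] at this
    exact absurd (this.symm) (ne_of_gt hDpos)
  rcases lt_or_gt_of_ne hdet with hneg | hpos
  · right
    refine ⟨?_, hneg⟩
    intro j
    have hk := key j
    have hD := hDnn j
    by_contra hgt
    push_neg at hgt
    simp only [Pi.zero_apply] at hgt
    nlinarith
  · left
    refine ⟨?_, hpos⟩
    intro j
    have hk := key j
    have hD := hDnn j
    by_contra hgt
    push_neg at hgt
    simp only [Pi.zero_apply] at hgt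
    nlinarith
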